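/- Let A ∈ ℝ^{m×n} be a nonzero matrix, let k ≥ 1, and let X₁, …, X_k be i.i.d. standard Gaussian vectors in ℝⁿ. Then for every θ > 0, the Vanilla estimator T^v_k(θ,X) = θ · max_{1≤i≤k} ‖AXᵢ‖ satisfies P(T^v_k(θ,X) ≤ ‖A‖) ≤ (√(2/π) · θ⁻¹)^k. -/

import Mathlib

open MeasureTheory ProbabilityTheory Real Matrix

/-- Spectral norm (ℓ²→ℓ² operator norm) of a real matrix. -/
noncomputable def matrixSpectralNorm {m n : ℕ} (A : Matrix (Fin m) (Fin n) ℝ) : ℝ :=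
  ‖LinearMap.toContinuousLinearMap (Matrix.toEuclideanLin A)‖

/-- Frobenius norm of a real matrix. -/
noncomputable def frobeniusNorm {m n : ℕ} (A : Matrix (Fin m) (Fin n) ℝ) : ℝ :=
  Real.sqrt (∑ i, ∑ j, (A i j) ^ 2)

/-- Effective rank `ρ = ‖A‖_F² / ‖A‖²`. -/
noncomputable def effectiveRank {m n : ℕ} (A : Matrix (Fin m) (Fin n) ℝ) : ℝ :=
  frobeniusNorm A ^ 2 / matrixSpectralNorm A ^ 2

/-- The standard Gaussian measure on `EuclideanSpace ℝ (Fin n)`: the law of a random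
vector with i.i.d. `N(0,1)` coordinates. -/
noncomputable def stdGaussian (n : ℕ) : Measure (EuclideanSpace ℝ (Fin n)) :=
  (Measure.pi fun _ : Fin n => gaussianReal 0 1).map
    (MeasurableEquiv.toLp 2 (Fin n → ℝ))

/-- CDF of the chi-squared distribution with one degree of freedom:
`χ₁²(t) = P(ξ² ≤ t)` for `ξ ~ N(0,1)`. -/
noncomputable def chiSq1CDF (t : ℝ) : ℝ :=
  ((gaussianReal 0 1) {x : ℝ | x ^ 2 ≤ t}).toReal

/-- Density of the chi-squared distribution with one degree of freedom:
`p₁(u) = e^{-u/2} / √(2 π u)`. -/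
noncomputable def chiSq1PDF (u : ℝ) : ℝ :=
  Real.exp (-u / 2) / Real.sqrt (2 * Real.pi * u)

/-- Density `p_{(1,α)}` of `ξ² + α η²` for `ξ, η` i.i.d. `N(0,1)`:
`p_{(1,α)}(t) = ∫₀^t p₁(s) (1/α) p₁((t-s)/α) ds`. -/
noncomputable def weightedChiSqPDF (α : ℝ) (t : ℝ) : ℝ :=
  ∫ s in (0:ℝ)..t, chiSq1PDF s * ((1 / α) * chiSq1PDF ((t - s) / α))

/-- The Counterbalance estimator
`T^cb(θ, (x₁, x₂)) = θ √((‖AᵀAx₁‖/‖Ax₁‖)² + ‖Ax₂‖²)`. -/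
noncomputable def counterbalance {m n : ℕ} (A : Matrix (Fin m) (Fin n) ℝ) (θ : ℝ)
    (x₁ x₂ : EuclideanSpace ℝ (Fin n)) : ℝ :=
  θ * Real.sqrt ((‖Matrix.toEuclideanLin Aᵀ (Matrix.toEuclideanLin A x₁)‖ /
      ‖Matrix.toEuclideanLin A x₁‖) ^ 2 + ‖Matrix.toEuclideanLin A x₂‖ ^ 2)

open scoped ENNReal NNReal
open scoped RealInnerProductSpace


lemma lintegral_pi_prod {n : ℕ} {E : Fin n → Type*} [∀ i, MeasurableSpace (E i)]
    (μ : ∀ i, Measure (E i)) [∀ i, SigmaFinite (μ i)]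
    (f : ∀ i, E i → ℝ≥0∞) (hf : ∀ i, Measurable (f i)) :
    ∫⁻ x, ∏ i, f i (x i) ∂Measure.pi μ = ∏ i, ∫⁻ x, f i x ∂μ i := by
  induction n with
  | zero => simp
  | succ n ih =>
    have hmp := (MeasureTheory.measurePreserving_piFinSuccAbove μ 0).symm
    rw [← hmp.lintegral_comp (by fun_prop), Fin.prod_univ_succ]
    simp_rw [MeasurableEquiv.piFinSuccAbove_symm_apply, Fin.insertNthEquiv,
      Fin.prod_univ_succ, Fin.insertNth_zero, Equiv.coe_fn_mk,
      Fin.cons_zero, Fin.cons_succ]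
    have hg : Measurable (fun y : (j : Fin n) → E j.succ => ∏ x : Fin n, f x.succ (y x)) := by
      fun_prop
    rw [← ih (fun i => μ i.succ) (fun i => f i.succ) (fun i => hf i.succ)]
    exact lintegral_prod_mul (μ := μ 0) (ν := Measure.pi fun i : Fin n => μ i.succ) (hf 0).aemeasurable hg.aemeasurable

lemma pi_withDensity' {n : ℕ} {E : Fin n → Type*} [∀ i, MeasurableSpace (E i)]
    (μ : ∀ i, Measure (E i)) [∀ i, SigmaFinite (μ i)]
    (f : ∀ i, E i → ℝ≥0∞) (hf : ∀ i, Measurable (f i))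
    [∀ i, SigmaFinite ((μ i).withDensity (f i))] :
    Measure.pi (fun i => (μ i).withDensity (f i)) =
      (Measure.pi μ).withDensity (fun x => ∏ i, f i (x i)) := by
  refine Measure.pi_eq fun s hs => ?_
  rw [withDensity_apply _ (MeasurableSet.univ_pi hs)]
  have key : ∫⁻ x in Set.pi Set.univ s, ∏ i, f i (x i) ∂Measure.pi μ
      = ∫⁻ x, ∏ i, (s i).indicator (f i) (x i) ∂Measure.pi μ := by
    rw [← lintegral_indicator (MeasurableSet.univ_pi hs)]
    congr 1
    ext x
    by_cases hx : x ∈ Set.pi Set.univ s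
    · rw [Set.indicator_of_mem hx]
      exact Finset.prod_congr rfl fun i _ =>
        (Set.indicator_of_mem (hx i (Set.mem_univ i)) _).symm
    · rw [Set.indicator_of_notMem hx]
      rw [Set.mem_univ_pi] at hx
      push_neg at hx
      obtain ⟨i, hi⟩ := hx
      exact (Finset.prod_eq_zero (Finset.mem_univ i)
        (Set.indicator_of_notMem hi _)).symm
  rw [key, lintegral_pi_prod μ _ (fun i => (hf i).indicator (hs i))]
  exact Finset.prod_congr rfl fun i _ =>
    ((lintegral_indicator (hs i) _).trans (withDensity_apply _ (hs i)).symm)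

lemma map_withDensity_equiv {α β : Type*} [MeasurableSpace α] [MeasurableSpace β]
    (μ : Measure α) (e : α ≃ᵐ β) (f : α → ℝ≥0∞) (hf : Measurable f) :
    (μ.withDensity f).map e = (μ.map e).withDensity (f ∘ e.symm) := by
  ext s hs
  rw [Measure.map_apply e.measurable hs, withDensity_apply _ (e.measurable hs),
    withDensity_apply _ hs,
    setLIntegral_map hs (hf.comp e.symm.measurable) e.measurable]
  congr 1
  ext x
  simp

noncomputable def stdDensity (n : ℕ) (x : EuclideanSpace ℝ (Fin n)) : ℝ≥0∞ :=
  ENNReal.ofReal ((Real.sqrt (2 * Real.pi))⁻¹ ^ n * Real.exp (-‖x‖ ^ 2 / 2))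

lemma prod_gaussianPDF_eq {n : ℕ} (x : EuclideanSpace ℝ (Fin n)) :
    ∏ i, gaussianPDF 0 1 (x i) = stdDensity n x := by
  rw [stdDensity, gaussianPDF_def]
  rw [← ENNReal.ofReal_prod_of_nonneg (fun i _ => gaussianPDFReal_nonneg 0 1 (x i))]
  congr 1
  simp only [gaussianPDFReal]
  rw [Finset.prod_mul_distrib, Finset.prod_const, ← Real.exp_sum]
  congr 1
  · norm_num
  · rw [EuclideanSpace.norm_eq, Real.sq_sqrt (by positivity)]
    simp only [sub_zero, mul_one, Real.norm_eq_abs, sq_abs]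
    congr 1
    rw [← Finset.sum_div, Finset.sum_neg_distrib]
    norm_num

lemma stdGaussian_eq_withDensity (n : ℕ) :
    stdGaussian n = (volume : Measure (EuclideanSpace ℝ (Fin n))).withDensity (stdDensity n) := by
  have h1 : (gaussianReal 0 1 : Measure ℝ) = volume.withDensity (gaussianPDF 0 1) :=
    gaussianReal_of_var_ne_zero 0 one_ne_zero
  rw [_root_.stdGaussian]
  haveI : SigmaFinite ((volume : Measure ℝ).withDensity (gaussianPDF 0 1)) := by
    rw [← h1]; infer_instance
  conv_lhs => rw [show (fun _ : Fin n => gaussianReal 0 1) = fun _ : Fin n => volume.withDensity (gaussianPDF 0 1) from funext fun _ => h1]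
  rw [pi_withDensity' (fun _ => volume) (fun _ => gaussianPDF 0 1)
    (fun _ => measurable_gaussianPDF 0 1)]
  rw [map_withDensity_equiv (Measure.pi fun _ : Fin n => (volume : Measure ℝ))
    (MeasurableEquiv.toLp 2 (Fin n → ℝ))
    (fun x => ∏ i : Fin n, gaussianPDF 0 1 (x i))
    (by exact Finset.measurable_prod _ fun i _ =>
      (measurable_gaussianPDF 0 1).comp (measurable_pi_apply i))]
  rw [← volume_pi,
    (show MeasurePreserving (MeasurableEquiv.toLp 2 (Fin n → ℝ)) volume volume from
      MeasurePreserving.symm _ (EuclideanSpace.volume_preserving_symm_measurableEquiv_toLp (Fin n))).map_eq]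
  congr 1
  ext x
  rw [Function.comp_apply, ← prod_gaussianPDF_eq]
  rfl

lemma measurable_stdDensity (n : ℕ) : Measurable (stdDensity n) := by
  apply Measurable.ennreal_ofReal
  fun_prop

lemma stdGaussian_map_isometry {n : ℕ}
    (e : EuclideanSpace ℝ (Fin n) ≃ₗᵢ[ℝ] EuclideanSpace ℝ (Fin n)) :
    (stdGaussian n).map e = stdGaussian n := by
  rw [stdGaussian_eq_withDensity]
  have h := map_withDensity_equiv (volume : Measure (EuclideanSpace ℝ (Fin n)))
    e.toMeasurableEquiv (stdDensity n) (measurable_stdDensity n)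
  rw [show ⇑e = ⇑e.toMeasurableEquiv from rfl, h, LinearIsometryEquiv.coe_toMeasurableEquiv,
    e.measurePreserving.map_eq]
  congr 1
  ext x
  rw [Function.comp_apply]
  unfold stdDensity
  rw [← LinearIsometryEquiv.toMeasurableEquiv_symm, LinearIsometryEquiv.coe_toMeasurableEquiv,
    e.symm.norm_map]

lemma stdGaussian_cylinder {n : ℕ} (j : Fin n) (s : Set ℝ) :
    stdGaussian n {x | x j ∈ s} = gaussianReal 0 1 s := by
  rw [_root_.stdGaussian, MeasurableEquiv.map_apply]
  have h1 : (MeasurableEquiv.toLp 2 (Fin n → ℝ)) ⁻¹' {x | x j ∈ s}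
      = Set.pi Set.univ (Function.update (fun _ : Fin n => (Set.univ : Set ℝ)) j s) := by
    ext y
    simp only [Set.mem_preimage, Set.mem_setOf_eq, Set.mem_univ_pi, Function.update_apply]
    constructor
    · intro h i
      split
      · next hij => subst hij; exact h
      · trivial
    · intro h
      simpa using h j
  rw [h1, Measure.pi_pi]
  rw [Finset.prod_eq_single j (fun i _ hij => by simp [Function.update_apply, hij])
    (fun h => absurd (Finset.mem_univ j) h)]
  simp

lemma gaussianReal_Icc_le {a : ℝ} (ha : 0 ≤ a) :
    gaussianReal 0 1 (Set.Icc (-a) a) ≤ ENNReal.ofReal (Real.sqrt (2 / Real.pi) * a) := by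
  rw [gaussianReal_of_var_ne_zero 0 one_ne_zero, withDensity_apply _ measurableSet_Icc]
  have hb : ∀ x : ℝ, gaussianPDF 0 1 x ≤ ENNReal.ofReal (Real.sqrt (2 * Real.pi))⁻¹ := by
    intro x
    rw [gaussianPDF]
    apply ENNReal.ofReal_le_ofReal
    rw [gaussianPDFReal]
    have h1 : Real.exp (-(x - 0) ^ 2 / (2 * (1:ℝ≥0))) ≤ 1 := by
      apply Real.exp_le_one_iff.mpr
      simp only [NNReal.coe_one, mul_one]
      nlinarith [sq_nonneg (x - 0)]
    calc (Real.sqrt (2 * Real.pi * (1:ℝ≥0)))⁻¹ * Real.exp (-(x - 0) ^ 2 / (2 * (1:ℝ≥0)))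
        ≤ (Real.sqrt (2 * Real.pi * (1:ℝ≥0)))⁻¹ * 1 := by
          apply mul_le_mul_of_nonneg_left h1 (by positivity)
      _ = (Real.sqrt (2 * Real.pi))⁻¹ := by norm_num
  calc ∫⁻ x in Set.Icc (-a) a, gaussianPDF 0 1 x
      ≤ ∫⁻ _ in Set.Icc (-a) a, ENNReal.ofReal (Real.sqrt (2 * Real.pi))⁻¹ :=
        lintegral_mono fun x => hb x
    _ = ENNReal.ofReal (Real.sqrt (2 * Real.pi))⁻¹ * volume (Set.Icc (-a) a) := by
        rw [setLIntegral_const]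
    _ ≤ ENNReal.ofReal (Real.sqrt (2 / Real.pi) * a) := by
        rw [Real.volume_Icc, ← ENNReal.ofReal_mul (by positivity)]
        apply ENNReal.ofReal_le_ofReal
        have hπ : 0 < Real.pi := Real.pi_pos
        rw [show a - -a = 2 * a by ring]
        rw [show (Real.sqrt (2 * Real.pi))⁻¹ * (2 * a) = (2 / Real.sqrt (2 * Real.pi)) * a by ring]
        apply mul_le_mul_of_nonneg_right _ ha
        rw [Real.sqrt_mul (by norm_num : (0:ℝ) ≤ 2), Real.sqrt_div (by norm_num : (0:ℝ) ≤ 2)]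
        have h2 : Real.sqrt 2 * Real.sqrt 2 = 2 := Real.mul_self_sqrt (by norm_num)
        rw [div_le_div_iff₀ (by positivity) (by positivity)]
        nlinarith [Real.sqrt_nonneg Real.pi, Real.sqrt_pos.mpr hπ]

open scoped RealInnerProductSpace
open Matrix

lemma nonempty_fin_of_ne_zero {m n : ℕ} {A : Matrix (Fin m) (Fin n) ℝ} (hA : A ≠ 0) :
    Nonempty (Fin n) := by
  by_contra h
  exact hA (by ext i j; exact absurd ⟨j⟩ h)

lemma spectralNorm_pos {m n : ℕ} {A : Matrix (Fin m) (Fin n) ℝ} (hA : A ≠ 0) :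
    0 < matrixSpectralNorm A := by
  rw [matrixSpectralNorm, norm_pos_iff]
  intro h
  apply hA
  have h2 : Matrix.toEuclideanLin A = 0 := by
    ext x i
    exact congrArg (fun v => v i) (DFunLike.congr_fun h x)
  exact (LinearEquiv.map_eq_zero_iff _).mp h2

lemma spectral_attained {m n : ℕ} (A : Matrix (Fin m) (Fin n) ℝ) (hA : A ≠ 0) :
    ∃ w : EuclideanSpace ℝ (Fin n), matrixSpectralNorm A ≤ ‖w‖ ∧
      ∀ x, |⟪w, x⟫| ≤ ‖Matrix.toEuclideanLin A x‖ := by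
  obtain ⟨j0⟩ := nonempty_fin_of_ne_zero hA
  set Lc := LinearMap.toContinuousLinearMap (Matrix.toEuclideanLin A) with hLc
  have hs : 0 < ‖Lc‖ := spectralNorm_pos hA
  have hcont : ContinuousOn (fun x => ‖Lc x‖) (Metric.sphere (0 : EuclideanSpace ℝ (Fin n)) 1) :=
    (Lc.continuous.norm).continuousOn
  obtain ⟨v, hv1, hvmax'⟩ := (isCompact_sphere (0 : EuclideanSpace ℝ (Fin n)) 1).exists_isMaxOn
    ⟨EuclideanSpace.single j0 1, by
      simp [mem_sphere_zero_iff_norm, EuclideanSpace.norm_single]⟩ hcont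
  have hvmax : ∀ x ∈ Metric.sphere (0 : EuclideanSpace ℝ (Fin n)) 1, ‖Lc x‖ ≤ ‖Lc v‖ :=
    fun x hx => hvmax' hx
  have hv : ‖v‖ = 1 := mem_sphere_zero_iff_norm.mp hv1
  have hLv : ‖Lc v‖ = ‖Lc‖ := by
    apply le_antisymm
    · simpa [hv] using Lc.le_opNorm v
    · apply ContinuousLinearMap.opNorm_le_bound _ (norm_nonneg _)
      intro x
      rcases eq_or_ne x 0 with rfl | hx
      · simp
      · have hx0 : 0 < ‖x‖ := norm_pos_iff.mpr hx
        have hxs : ‖x‖⁻¹ • x ∈ Metric.sphere (0 : EuclideanSpace ℝ (Fin n)) 1 := by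
          simp [mem_sphere_zero_iff_norm, norm_smul, inv_mul_cancel₀ hx0.ne']
        have h2 := hvmax _ hxs
        rw [_root_.map_smul, norm_smul, norm_inv, norm_norm] at h2
        have h3 := mul_le_mul_of_nonneg_left h2 hx0.le
        rwa [← mul_assoc, mul_inv_cancel₀ hx0.ne', one_mul, mul_comm] at h3
  have hAT : Matrix.toEuclideanLin Aᵀ = LinearMap.adjoint (Matrix.toEuclideanLin A) := by
    have hAA : Aᴴ = Aᵀ := by ext i j; simp [Matrix.conjTranspose_apply]
    rw [← Matrix.toEuclideanLin_conjTranspose_eq_adjoint, hAA]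
  have hsn : matrixSpectralNorm A = ‖Lc‖ := rfl
  set w : EuclideanSpace ℝ (Fin n) :=
    (matrixSpectralNorm A)⁻¹ • (Matrix.toEuclideanLin Aᵀ (Matrix.toEuclideanLin A v)) with hw
  have hinner : ∀ x, ⟪w, x⟫ =
      ‖Lc‖⁻¹ * ⟪Matrix.toEuclideanLin A v, Matrix.toEuclideanLin A x⟫ := by
    intro x
    rw [hw, real_inner_smul_left, hAT, LinearMap.adjoint_inner_left, hsn]
  have hLcoe : ∀ x, Matrix.toEuclideanLin A x = Lc x := fun _ => rfl
  have hbound : ∀ x, |⟪w, x⟫| ≤ ‖Matrix.toEuclideanLin A x‖ := by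
    intro x
    rw [hinner, abs_mul, abs_inv, abs_norm]
    calc ‖Lc‖⁻¹ * |⟪Matrix.toEuclideanLin A v, Matrix.toEuclideanLin A x⟫|
        ≤ ‖Lc‖⁻¹ * (‖Lc‖ * ‖Matrix.toEuclideanLin A x‖) := by
          apply mul_le_mul_of_nonneg_left _ (inv_nonneg.mpr (norm_nonneg _))
          calc |⟪Matrix.toEuclideanLin A v, Matrix.toEuclideanLin A x⟫|
              ≤ ‖Matrix.toEuclideanLin A v‖ * ‖Matrix.toEuclideanLin A x‖ :=
                abs_real_inner_le_norm _ _
            _ = ‖Lc‖ * ‖Matrix.toEuclideanLin A x‖ := by rw [hLcoe v, hLv]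
      _ = ‖Matrix.toEuclideanLin A x‖ := by field_simp
  refine ⟨w, ?_, hbound⟩
  have h1 : ⟪w, v⟫ = ‖Lc‖ := by
    rw [hinner v, hLcoe v, real_inner_self_eq_norm_sq, hLv]
    field_simp
  have h2 : ⟪w, v⟫ ≤ ‖w‖ * ‖v‖ := real_inner_le_norm _ _
  rw [h1, hv, mul_one] at h2
  rw [hsn]
  exact h2

lemma single_vec_bound {m n : ℕ} (A : Matrix (Fin m) (Fin n) ℝ) (hA : A ≠ 0)
    {c : ℝ} (hc : 0 ≤ c) :
    stdGaussian n {x | ‖Matrix.toEuclideanLin A x‖ ≤ matrixSpectralNorm A * c} ≤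
      ENNReal.ofReal (Real.sqrt (2 / Real.pi) * c) := by
  obtain ⟨j0⟩ := nonempty_fin_of_ne_zero hA
  obtain ⟨w, hw1, hw2⟩ := spectral_attained A hA
  have hs : 0 < matrixSpectralNorm A := spectralNorm_pos hA
  have hw0 : 0 < ‖w‖ := lt_of_lt_of_le hs hw1
  set u : EuclideanSpace ℝ (Fin n) := ‖w‖⁻¹ • w with hu
  have hu1 : ‖u‖ = 1 := by
    rw [hu, norm_smul, norm_inv, norm_norm, inv_mul_cancel₀ hw0.ne']
  set e := Submodule.reflection (ℝ ∙ (u - EuclideanSpace.single j0 (1:ℝ)))ᗮ with he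
  have heu : e u = EuclideanSpace.single j0 (1:ℝ) :=
    Submodule.reflection_sub (by rw [hu1, EuclideanSpace.norm_single]; norm_num)
  -- subset chain
  have hsub : {x : EuclideanSpace ℝ (Fin n) | ‖Matrix.toEuclideanLin A x‖ ≤ matrixSpectralNorm A * c}
      ⊆ ⇑e ⁻¹' {y : EuclideanSpace ℝ (Fin n) | |y j0| ≤ c} := by
    intro x hx
    simp only [Set.mem_setOf_eq] at hx
    have h1 : |⟪w, x⟫| ≤ matrixSpectralNorm A * c := le_trans (hw2 x) hx
    have h2 : ⟪u, x⟫ = (e x) j0 := by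
      have := LinearIsometryEquiv.inner_map_map (Submodule.reflection (ℝ ∙ (u - EuclideanSpace.single j0 (1:ℝ)))ᗮ) u x
      rw [← he] at this
      rw [← this, heu, EuclideanSpace.inner_single_left]
      simp
    have h3 : |⟪u, x⟫| ≤ c := by
      rw [hu, real_inner_smul_left, abs_mul, abs_inv, abs_norm]
      calc ‖w‖⁻¹ * |⟪w, x⟫| ≤ ‖w‖⁻¹ * (matrixSpectralNorm A * c) :=
            mul_le_mul_of_nonneg_left h1 (inv_nonneg.mpr (norm_nonneg _))
        _ ≤ ‖w‖⁻¹ * (‖w‖ * c) := by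
            apply mul_le_mul_of_nonneg_left _ (inv_nonneg.mpr (norm_nonneg _))
            exact mul_le_mul_of_nonneg_right hw1 hc
        _ = c := by field_simp
    simpa [Set.mem_preimage, Set.mem_setOf_eq, ← h2] using h3
  have hSmeas : MeasurableSet {y : EuclideanSpace ℝ (Fin n) | |y j0| ≤ c} := by
    have : Measurable fun y : EuclideanSpace ℝ (Fin n) => y j0 :=
      (measurable_pi_apply j0).comp (MeasurableEquiv.toLp 2 (Fin n → ℝ)).symm.measurable
    exact measurableSet_le this.abs measurable_const
  calc stdGaussian n {x | ‖Matrix.toEuclideanLin A x‖ ≤ matrixSpectralNorm A * c}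
      ≤ stdGaussian n (⇑e ⁻¹' {y | |y j0| ≤ c}) := measure_mono hsub
    _ = (stdGaussian n).map e {y | |y j0| ≤ c} := by
        rw [Measure.map_apply (LinearIsometryEquiv.continuous e).measurable hSmeas]
    _ = stdGaussian n {y | |y j0| ≤ c} := by
        rw [stdGaussian_map_isometry e]
    _ = gaussianReal 0 1 {t : ℝ | |t| ≤ c} := stdGaussian_cylinder j0 {t | |t| ≤ c}
    _ ≤ ENNReal.ofReal (Real.sqrt (2 / Real.pi) * c) := by
        have : {t : ℝ | |t| ≤ c} = Set.Icc (-c) c := by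
          ext t; simp [abs_le]
        rw [this]
        exact gaussianReal_Icc_le hc

/-- for nonzero `A`, i.i.d. standard Gaussian vectors `X₁, …, X_k`
(`k ≥ 1`) and `θ > 0`, the Vanilla estimator `T^v_k(θ,X) = θ maxᵢ ‖AXᵢ‖` satisfies
`P(T^v_k(θ,X) ≤ ‖A‖) ≤ (√(2/π) θ⁻¹)^k`. -/
theorem vanilla_max_underestimation
    {m n : ℕ} (A : Matrix (Fin m) (Fin n) ℝ) (hA : A ≠ 0)
    (k : ℕ) (hk : 1 ≤ k)
    {Ω : Type*} [MeasureSpace Ω] [IsProbabilityMeasure (ℙ : Measure Ω)]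
    (X : Fin k → Ω → EuclideanSpace ℝ (Fin n))
    (hindep : iIndepFun X ℙ)
    (hX : ∀ i, Measure.map (X i) ℙ = stdGaussian n)
    (θ : ℝ) (hθ : 0 < θ) :
    ℙ {ω | θ * (Finset.univ.sup'
          (Finset.univ_nonempty_iff.mpr (Fin.pos_iff_nonempty.mp hk))
          fun i => ‖Matrix.toEuclideanLin A (X i ω)‖) ≤ matrixSpectralNorm A} ≤
      ENNReal.ofReal ((Real.sqrt (2 / Real.pi) * θ⁻¹) ^ k) := by
  set C : Set (EuclideanSpace ℝ (Fin n)) :=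
    {x | ‖Matrix.toEuclideanLin A x‖ ≤ matrixSpectralNorm A * θ⁻¹} with hCdef
  have hC : MeasurableSet C := by
    have hcont : Continuous fun x : EuclideanSpace ℝ (Fin n) =>
        ‖Matrix.toEuclideanLin A x‖ :=
      (LinearMap.toContinuousLinearMap (Matrix.toEuclideanLin A)).continuous.norm
    exact measurableSet_le hcont.measurable measurable_const
  have hset : {ω | θ * (Finset.univ.sup'
          (Finset.univ_nonempty_iff.mpr (Fin.pos_iff_nonempty.mp hk))
          fun i => ‖Matrix.toEuclideanLin A (X i ω)‖) ≤ matrixSpectralNorm A}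
      = ⋂ i ∈ Finset.univ, X i ⁻¹' C := by
    ext ω
    simp only [Set.mem_setOf_eq, Set.mem_iInter, Set.mem_preimage, Finset.mem_univ,
      Set.iInter_true, hCdef]
    rw [← le_div_iff₀' hθ, Finset.sup'_le_iff]
    simp [div_eq_mul_inv]
  have hXae : ∀ i, AEMeasurable (X i) ℙ := by
    intro i
    by_contra h
    haveI : IsProbabilityMeasure (stdGaussian n) := by
      rw [_root_.stdGaussian]
      exact Measure.isProbabilityMeasure_map
        (MeasurableEquiv.toLp 2 (Fin n → ℝ)).measurable.aemeasurable
    have h0 := hX i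
    rw [Measure.map_of_not_aemeasurable h] at h0
    have := measure_univ (μ := stdGaussian n)
    rw [← h0] at this
    simp at this
  have hfac : ∀ i, ℙ (X i ⁻¹' C) ≤ ENNReal.ofReal (Real.sqrt (2 / Real.pi) * θ⁻¹) := by
    intro i
    rw [← Measure.map_apply_of_aemeasurable (hXae i) hC, hX i]
    exact single_vec_bound A hA (inv_nonneg.mpr hθ.le)
  rw [hset, hindep.measure_inter_preimage_eq_mul Finset.univ (fun i _ => hC)]
  calc ∏ i : Fin k, ℙ (X i ⁻¹' C)
      ≤ ∏ _i : Fin k, ENNReal.ofReal (Real.sqrt (2 / Real.pi) * θ⁻¹) :=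
        Finset.prod_le_prod' fun i _ => hfac i
    _ = ENNReal.ofReal (Real.sqrt (2 / Real.pi) * θ⁻¹) ^ k := by
        rw [Finset.prod_const, Finset.card_univ, Fintype.card_fin]
    _ = ENNReal.ofReal ((Real.sqrt (2 / Real.pi) * θ⁻¹) ^ k) := by
        rw [ENNReal.ofReal_pow (by positivity)]
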